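/- Let H be a real Hilbert space, c ∈ H, r > 0, and x̄ ∈ H with ‖x̄ − c‖ > r. Then for every y ∈ H, D̂*P_{B(c,r)}(x̄)(y) = { (r/‖x̄ − c‖)(y − (⟨x̄ − c, y⟩/‖x̄ − c‖²)(x̄ − c)) }. -/

import Mathlib

open RealInnerProductSpace Filter Metric

/-- `P` is the metric projection (nearest-point map) onto `C`. -/
def IsMetricProj {H : Type*} [NormedAddCommGroup H] [InnerProductSpace ℝ H]
    (C : Set H) (P : H → H) : Prop :=
  ∀ x : H, P x ∈ C ∧ ∀ w ∈ C, ‖x - P x‖ ≤ ‖x - w‖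

/-- The set `D̂*f(xb)(y)` characterized by the limsup inequality. -/
def coderivSet {H : Type*} [NormedAddCommGroup H] [InnerProductSpace ℝ H]
    (f : H → H) (xb y : H) : Set H :=
  {z | ∀ ε > (0:ℝ), ∃ δ > (0:ℝ), ∀ u : H, u ≠ xb → ‖u - xb‖ < δ →
    (⟪z, u - xb⟫ - ⟪y, f u - f xb⟫) / ‖u - xb‖ < ε}

/-- The (Fréchet) regular normal cone via the limsup inequality. -/
def regNormalCone {E : Type*} [NormedAddCommGroup E] [InnerProductSpace ℝ E]
    (Ω : Set E) (w : E) : Set E :=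
  {v | ∀ ε > (0:ℝ), ∃ δ > (0:ℝ), ∀ u ∈ Ω, u ≠ w → ‖u - w‖ < δ →
    ⟪v, u - w⟫ / ‖u - w‖ < ε}

/-- The Bouligand (contingent) tangent cone. -/
def bouligandTangentCone {E : Type*} [NormedAddCommGroup E] [NormedSpace ℝ E]
    (Ω : Set E) (w : E) : Set E :=
  {z | ∃ t : ℕ → ℝ, ∃ s : ℕ → E, (∀ n, 0 < t n) ∧
    Tendsto t atTop (nhds 0) ∧ Tendsto s atTop (nhds z) ∧ ∀ n, w + t n • s n ∈ Ω}

variable {H : Type*} [NormedAddCommGroup H] [InnerProductSpace ℝ H] [CompleteSpace H]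

/-- Explicit formula for the metric projection onto a closed ball, outside the ball. -/
theorem aux_proj_formula (c : H) (r : ℝ) (hr : 0 < r) (P : H → H)
    (hP : IsMetricProj (closedBall c r) P)
    (u : H) (hu : r < ‖u - c‖) : P u = c + (r / ‖u - c‖) • (u - c) := by
  set d := ‖u - c‖ with hd
  have hd0 : 0 < d := hr.trans hu
  have hq : c + (r / d) • (u - c) ∈ closedBall c r := by
    simp only [mem_closedBall, dist_eq_norm, add_sub_cancel_left, norm_smul, Real.norm_eq_abs,
      abs_div, abs_of_pos hr, abs_of_pos hd0]
    rw [← hd, div_mul_cancel₀ _ hd0.ne']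
  have huq : ‖u - (c + (r / d) • (u - c))‖ = d - r := by
    have : u - (c + (r / d) • (u - c)) = (1 - r / d) • (u - c) := by
      rw [sub_smul, one_smul]; abel
    rw [this, norm_smul, Real.norm_eq_abs, ← hd,
      abs_of_nonneg (by rw [sub_nonneg]; exact (div_le_one hd0).2 hu.le)]
    field_simp
  obtain ⟨hPmem, hPle⟩ := hP u
  have h1 : ‖u - P u‖ ≤ d - r := le_of_le_of_eq (hPle _ hq) huq
  have h2 : ‖P u - c‖ ≤ r := by simpa [dist_eq_norm] using hPmem
  have h3 : d ≤ ‖u - P u‖ + ‖P u - c‖ := by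
    have he : u - c = (u - P u) + (P u - c) := by abel
    calc d = ‖(u - P u) + (P u - c)‖ := by rw [hd, he]
    _ ≤ _ := norm_add_le _ _
  have h4 : ‖u - P u‖ = d - r := le_antisymm h1 (by linarith)
  have h5 : ‖P u - c‖ = r := le_antisymm h2 (by linarith)
  have hsr : SameRay ℝ (u - P u) (P u - c) := by
    rw [sameRay_iff_norm_add]
    have : u - P u + (P u - c) = u - c := by abel
    rw [this, ← hd, h4, h5]; ring
  have hsm := hsr.norm_smul_eq
  rw [h4, h5] at hsm
  have key : d • P u = d • (c + (r / d) • (u - c)) := by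
    have h6 : d • P u = r • u + (d - r) • c := by
      linear_combination (norm := module) hsm
    rw [h6, smul_add, smul_smul, mul_div_cancel₀ _ hd0.ne']
    module
  exact smul_right_injective H hd0.ne' key

/-- The derivative of the exterior projection formula, together with the adjoint identity. -/
theorem aux_deriv (c : H) (r : ℝ) (xb y : H) (hv : ‖xb - c‖ ≠ 0) :
    ∃ A : H →L[ℝ] H, HasFDerivAt (fun u : H => c + (r / ‖u - c‖) • (u - c)) A xb ∧
      ∀ h : H, ⟪y, A h⟫ = ⟪(r / ‖xb - c‖) • (y - (⟪xb - c, y⟫ / ‖xb - c‖ ^ 2) • (xb - c)), h⟫ := by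
  have hn2 := ((hasFDerivAt_id xb).sub_const c).norm_sq
  simp only [id_eq] at hn2
  have hsq := hn2.sqrt (by positivity)
  rw [show (fun u : H => Real.sqrt (‖u - c‖ ^ 2)) = fun u => ‖u - c‖ from
    funext fun u => Real.sqrt_sq (norm_nonneg _)] at hsq
  have hinv := (hasDerivAt_inv hv).comp_hasFDerivAt xb hsq
  have hsc := hinv.const_mul r
  have hA := (hsc.smul ((hasFDerivAt_id xb).sub_const c)).const_add c
  refine ⟨_, by simpa only [Function.comp_def, div_eq_mul_inv, Pi.smul_apply', id_eq] using hA, fun h => ?_⟩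
  simp only [ContinuousLinearMap.add_apply, ContinuousLinearMap.smul_apply,
    ContinuousLinearMap.smulRight_apply, ContinuousLinearMap.comp_apply,
    ContinuousLinearMap.id_apply, innerSL_apply_apply, smul_eq_mul,
    Real.sqrt_sq (norm_nonneg _), inner_add_right, inner_smul_right, inner_sub_left,
    inner_smul_left, real_inner_self_eq_norm_sq, RCLike.inner_apply, conj_trivial,
    id_eq, inner_sub_right, nsmul_eq_mul, Nat.cast_ofNat]
  rw [real_inner_comm xb y, real_inner_comm c y]
  field_simp
  ring

theorem stmt14 (c : H) (r : ℝ) (hr : 0 < r) (xb : H) (hx : r < ‖xb - c‖)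
    (P : H → H) (hP : IsMetricProj (closedBall c r) P) (y : H) :
    coderivSet P xb y =
      {(r / ‖xb - c‖) • (y - (⟪xb - c, y⟫ / ‖xb - c‖ ^ 2) • (xb - c))} := by
  have hvpos : 0 < ‖xb - c‖ := hr.trans hx
  obtain ⟨A, hA, hAy⟩ := aux_deriv c r xb y hvpos.ne'
  have hev : P =ᶠ[nhds xb] fun u => c + (r / ‖u - c‖) • (u - c) := by
    filter_upwards [ball_mem_nhds xb (by linarith : (0:ℝ) < ‖xb - c‖ - r)] with u hu
    apply aux_proj_formula c r hr P hP
    have h1 : ‖u - xb‖ < ‖xb - c‖ - r := by rwa [mem_ball, dist_eq_norm] at hu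
    have h2 : ‖xb - c‖ ≤ ‖xb - u‖ + ‖u - c‖ := by
      have he : xb - c = (xb - u) + (u - c) := by abel
      rw [he]; exact norm_add_le _ _
    have h3 : ‖xb - u‖ = ‖u - xb‖ := norm_sub_rev _ _
    linarith
  have hPd : HasFDerivAt P A xb := hA.congr_of_eventuallyEq hev
  have ho : (fun u => P u - P xb - A (u - xb)) =o[nhds xb] fun u => u - xb := hPd.isLittleO
  set z₀ := (r / ‖xb - c‖) • (y - (⟪xb - c, y⟫ / ‖xb - c‖ ^ 2) • (xb - c)) with hz₀
  have hnum : ∀ z u : H, ⟪z, u - xb⟫ - ⟪y, P u - P xb⟫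
      = ⟪z - z₀, u - xb⟫ - ⟪y, P u - P xb - A (u - xb)⟫ := by
    intro z u
    have hsplit : ⟪y, P u - P xb⟫ = ⟪z₀, u - xb⟫ + ⟪y, P u - P xb - A (u - xb)⟫ := by
      rw [← hAy, ← inner_add_right]
      congr 1
      abel
    rw [inner_sub_left, hsplit]
    ring
  ext z
  simp only [Set.mem_singleton_iff]
  constructor
  · intro hz
    by_contra hne
    have hw : z - z₀ ≠ 0 := sub_ne_zero.2 hne
    have hwpos : 0 < ‖z - z₀‖ := norm_pos_iff.2 hw
    set ε := ‖z - z₀‖ / 4 with hε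
    have hεpos : 0 < ε := by positivity
    obtain ⟨δ₂, hδ₂, hδ₂p⟩ := hz ε hεpos
    have hc' : (0:ℝ) < ε / (‖y‖ + 1) := by positivity
    obtain ⟨δ₁, hδ₁, hδ₁p⟩ := Metric.eventually_nhds_iff.mp (ho.def hc')
    set t := min δ₁ δ₂ / (2 * ‖z - z₀‖) with ht
    have htpos : 0 < t := by positivity
    set u := xb + t • (z - z₀) with hu
    have hune : u ≠ xb := by
      simp only [hu, ne_eq, add_eq_left]
      exact smul_ne_zero htpos.ne' hw
    have huxb : u - xb = t • (z - z₀) := by rw [hu]; abel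
    have hnu : ‖u - xb‖ = t * ‖z - z₀‖ := by
      rw [huxb, norm_smul, Real.norm_eq_abs, abs_of_pos htpos]
    have hsmall : ‖u - xb‖ < min δ₁ δ₂ := by
      rw [hnu, ht]
      rw [div_mul_eq_mul_div, div_lt_iff₀ (by positivity)]
      nlinarith [lt_min hδ₁ hδ₂]
    have hb1 := hδ₁p (by rw [dist_eq_norm]; exact hsmall.trans_le (min_le_left _ _))
    have hb2 := hδ₂p u hune (hsmall.trans_le (min_le_right _ _))
    rw [hnum z u] at hb2
    have hip : ⟪z - z₀, u - xb⟫ = t * ‖z - z₀‖ ^ 2 := by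
      rw [huxb, inner_smul_right, real_inner_self_eq_norm_sq]
    have hib : |⟪y, P u - P xb - A (u - xb)⟫| ≤ ‖y‖ * (ε / (‖y‖ + 1) * ‖u - xb‖) :=
      (abs_real_inner_le_norm _ _).trans
        (mul_le_mul_of_nonneg_left hb1 (norm_nonneg _))
    have hyb : ‖y‖ * (ε / (‖y‖ + 1)) ≤ ε := by
      rw [mul_div_assoc']
      rw [div_le_iff₀ (by positivity)]
      nlinarith [norm_nonneg y, hεpos]
    have hupos : 0 < ‖u - xb‖ := by rw [hnu]; positivity
    rw [div_lt_iff₀ hupos] at hb2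
    have habs : -(ε * ‖u - xb‖) ≤ -⟪y, P u - P xb - A (u - xb)⟫ := by
      have h1 : ⟪y, P u - P xb - A (u - xb)⟫ ≤ ε * ‖u - xb‖ := by
        nlinarith [le_abs_self ⟪y, P u - P xb - A (u - xb)⟫, hib,
          mul_le_mul_of_nonneg_right hyb hupos.le]
      linarith
    have : t * ‖z - z₀‖ ^ 2 - ε * ‖u - xb‖ < ε * ‖u - xb‖ := by
      calc t * ‖z - z₀‖ ^ 2 - ε * ‖u - xb‖
          ≤ ⟪z - z₀, u - xb⟫ - ⟪y, P u - P xb - A (u - xb)⟫ := by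
            rw [hip]; linarith [habs]
        _ < ε * ‖u - xb‖ := hb2
    rw [hnu] at this
    have : ‖z - z₀‖ < 2 * ε := by nlinarith
    rw [hε] at this
    linarith
  · intro hz
    subst hz
    intro ε hεpos
    have hc' : (0:ℝ) < ε / (2 * (‖y‖ + 1)) := by positivity
    obtain ⟨δ, hδ, hδp⟩ := Metric.eventually_nhds_iff.mp (ho.def hc')
    refine ⟨δ, hδ, fun u hune hu => ?_⟩
    have hupos : 0 < ‖u - xb‖ := norm_pos_iff.2 (sub_ne_zero.2 hune)
    rw [hnum z₀ u, sub_self, inner_zero_left, zero_sub, div_lt_iff₀ hupos]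
    have hb1 := hδp (by rw [dist_eq_norm]; exact hu)
    have hib : |⟪y, P u - P xb - A (u - xb)⟫| ≤ ‖y‖ * (ε / (2 * (‖y‖ + 1)) * ‖u - xb‖) :=
      (abs_real_inner_le_norm _ _).trans
        (mul_le_mul_of_nonneg_left hb1 (norm_nonneg _))
    have hyb : ‖y‖ * (ε / (2 * (‖y‖ + 1))) < ε := by
      rw [mul_div_assoc', div_lt_iff₀ (by positivity)]
      nlinarith [norm_nonneg y]
    nlinarith [neg_abs_le ⟪y, P u - P xb - A (u - xb)⟫, hib,
      mul_lt_mul_of_pos_right hyb hupos]
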